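/- Let c ∈ ℂ, r > 0, and let f : ℂ → ℂ be complex-differentiable on an open set containing the closed disk {z : |z - c| ≤ r}. Let x_0, …, x_n be distinct points in the open disk {z : |z - c| < r}, let l(s) = ∏_{i=0}^n (s - x_i), and let P_n be the Lagrange interpolating polynomial of f at these nodes, P_n(x) = ∑_{i=0}^n f(x_i) ∏_{j≠i} (x - x_j)/(x_i - x_j). Then for every x in the open disk {z : |z - c| < r}, |f(x) - P_n(x)| ≤ (r/(2π))·(∫_0^{2π} |f(c + re^{iθ})|/|c + re^{iθ} - x| dθ)·|l(x)|·sup_{θ∈[0,2π]} (1/|l(c + re^{iθ})|). -/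

import Mathlib

open Finset

lemma pf_lemma {ι : Type*} [DecidableEq ι] {s : Finset ι} (v : ι → ℂ)
    (hvs : Set.InjOn v s) (hs : s.Nonempty) (z : ℂ) (hz : ∀ i ∈ s, z ≠ v i) :
    ∑ i ∈ s, (∏ j ∈ s.erase i, (v i - v j)⁻¹) * (z - v i)⁻¹ = (∏ i ∈ s, (z - v i))⁻¹ := by
  have h1 := Lagrange.sum_basis hvs hs
  have h2 := congrArg (Polynomial.eval z) h1
  rw [Polynomial.eval_finset_sum, Polynomial.eval_one] at h2
  have key : ∀ i ∈ s, Polynomial.eval z (Lagrange.basis s v i)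
      = (∏ j ∈ s.erase i, (v i - v j)⁻¹) * ∏ j ∈ s.erase i, (z - v j) := by
    intro i hi
    rw [Lagrange.basis, Polynomial.eval_prod, ← prod_mul_distrib]
    refine prod_congr rfl fun j hj => ?_
    simp [Lagrange.basisDivisor]
  rw [Finset.sum_congr rfl key] at h2
  refine eq_inv_of_mul_eq_one_left ?_
  rw [Finset.sum_mul, ← h2]
  refine sum_congr rfl fun i hi => ?_
  have hzi : z - v i ≠ 0 := sub_ne_zero.mpr (hz i hi)
  rw [← Finset.mul_prod_erase s _ hi]
  rw [show (∏ j ∈ s.erase i, (v i - v j)⁻¹) * (z - v i)⁻¹ * ((z - v i) * ∏ j ∈ s.erase i, (z - v j))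
      = (∏ j ∈ s.erase i, (v i - v j)⁻¹) * (∏ j ∈ s.erase i, (z - v j)) * ((z - v i)⁻¹ * (z - v i)) from by ring,
    inv_mul_cancel₀ hzi, mul_one]

lemma key_identity {n : ℕ} (x : Fin (n + 1) → ℂ) (hx : Function.Injective x)
    (X z : ℂ) (hXx : ∀ i, X ≠ x i) (hzx : ∀ i, z ≠ x i) (hzX : z ≠ X) :
    (z - X)⁻¹ - ∑ i, (∏ j ∈ univ.erase i, (X - x j) / (x i - x j)) * (z - x i)⁻¹
      = (∏ i, (X - x i)) * ((∏ i, (z - x i)) * (z - X))⁻¹ := by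
  set v : Option (Fin (n + 1)) → ℂ := fun o => o.elim X x with hv
  have hinj : Set.InjOn v (univ : Finset (Option (Fin (n + 1)))) := by
    intro a _ b _ hab
    match a, b with
    | none, none => rfl
    | none, some j => exact absurd hab (hXx j)
    | some i, none => exact absurd hab.symm (hXx i)
    | some i, some j => exact congrArg some (hx hab)
  have hz : ∀ o ∈ (univ : Finset (Option (Fin (n + 1)))), z ≠ v o := by
    rintro (_ | i) _
    · exact hzX
    · exact hzx i
  have hpf := pf_lemma v hinj univ_nonempty z hz
  have herase_none : (univ : Finset (Option (Fin (n + 1)))).erase none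
      = univ.map Function.Embedding.some := by
    rw [← map_some_eraseNone, univ_option, eraseNone_insertNone]
  have herase_some : ∀ i : Fin (n + 1), (univ : Finset (Option (Fin (n + 1)))).erase (some i)
      = insert none ((univ.erase i).map Function.Embedding.some) := by
    intro i
    ext (_ | j) <;> simp [eq_comm]
  have hnone_not : ∀ i : Fin (n+1), (none : Option (Fin (n+1))) ∉ (univ.erase i).map Function.Embedding.some := by
    intro i h
    rcases Finset.mem_map.mp h with ⟨a, _, ha⟩
    exact absurd ha (Option.some_ne_none a)
  have hB : (∏ i, (X - x i)) ≠ 0 :=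
    prod_ne_zero_iff.mpr fun i _ => sub_ne_zero.mpr (hXx i)
  have hxiX : ∀ i, x i - X ≠ 0 := fun i => sub_ne_zero.mpr fun h => hXx i h.symm
  rw [Fintype.sum_option, Fintype.prod_option] at hpf
  have hnone : (∏ j ∈ univ.erase (none : Option (Fin (n+1))), (v none - v j)⁻¹) * (z - v none)⁻¹
      = (∏ i, (X - x i))⁻¹ * (z - X)⁻¹ := by
    rw [herase_none, Finset.prod_map, ← Finset.prod_inv_distrib]
    rfl
  have hsome : ∀ i : Fin (n+1),
      (∏ j ∈ univ.erase (some i), (v (some i) - v j)⁻¹) * (z - v (some i))⁻¹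
      = ((x i - X)⁻¹ * ∏ j ∈ univ.erase i, (x i - x j)⁻¹) * (z - x i)⁻¹ := by
    intro i
    rw [herase_some i, Finset.prod_insert (hnone_not i), Finset.prod_map]
    rfl
  rw [hnone, Finset.sum_congr rfl fun i _ => hsome i] at hpf
  have hterm : ∀ i : Fin (n+1),
      (∏ i, (X - x i)) * (((x i - X)⁻¹ * ∏ j ∈ univ.erase i, (x i - x j)⁻¹) * (z - x i)⁻¹)
      = -(((∏ j ∈ univ.erase i, (X - x j)) * ∏ j ∈ univ.erase i, (x i - x j)⁻¹) * (z - x i)⁻¹) := by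
    intro i
    rw [← Finset.mul_prod_erase univ _ (mem_univ i)]
    have : (X - x i) * (x i - X)⁻¹ = -1 := by
      rw [show X - x i = -(x i - X) from by ring, neg_mul, mul_inv_cancel₀ (hxiX i)]
    calc (X - x i) * (∏ j ∈ univ.erase i, (X - x j)) *
          (((x i - X)⁻¹ * ∏ j ∈ univ.erase i, (x i - x j)⁻¹) * (z - x i)⁻¹)
        = ((X - x i) * (x i - X)⁻¹) * ((∏ j ∈ univ.erase i, (X - x j)) *
            (∏ j ∈ univ.erase i, (x i - x j)⁻¹) * (z - x i)⁻¹) := by ring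
      _ = _ := by rw [this]; ring
  have h2 := congrArg (fun t => (∏ i, (X - x i)) * t) hpf
  simp only [mul_add, Finset.mul_sum] at h2
  rw [← mul_assoc, mul_inv_cancel₀ hB, one_mul,
    Finset.sum_congr rfl fun i _ => hterm i, Finset.sum_neg_distrib] at h2
  have hC : ∀ i : Fin (n+1), (∏ j ∈ univ.erase i, (X - x j) / (x i - x j))
      = (∏ j ∈ univ.erase i, (X - x j)) * ∏ j ∈ univ.erase i, (x i - x j)⁻¹ := by
    intro i
    simp [div_eq_mul_inv, Finset.prod_mul_distrib]
  rw [Finset.sum_congr rfl fun i _ => by rw [hC i]]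
  simp only [hv, Option.elim_none, Option.elim_some] at h2
  linear_combination h2

theorem polynomial_interpolation_error_bound (c : ℂ) (r : ℝ) (hr : 0 < r) (f : ℂ → ℂ)
    (U : Set ℂ) (hUopen : IsOpen U) (hUsub : Metric.closedBall c r ⊆ U)
    (hf : DifferentiableOn ℂ f U)
    (n : ℕ) (x : Fin (n + 1) → ℂ) (hx : Function.Injective x)
    (hxball : ∀ i, x i ∈ Metric.ball c r)
    (l : ℂ → ℂ) (hl : ∀ s, l s = ∏ i, (s - x i))
    (P : ℂ → ℂ)
    (hP : ∀ X, P X = ∑ i, f (x i) * ∏ j ∈ univ.erase i, (X - x j) / (x i - x j))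
    (X : ℂ) (hX : X ∈ Metric.ball c r) :
    ‖f X - P X‖ ≤ (r / (2 * Real.pi)) *
      (∫ θ in (0:ℝ)..(2 * Real.pi),
        ‖f (c + (r : ℂ) * Complex.exp ((θ : ℂ) * Complex.I))‖ /
          ‖c + (r : ℂ) * Complex.exp ((θ : ℂ) * Complex.I) - X‖) *
      ‖l X‖ *
      (⨆ θ : Set.Icc (0:ℝ) (2 * Real.pi),
        1 / ‖l (c + (r : ℂ) * Complex.exp (((θ : ℝ) : ℂ) * Complex.I))‖) := by
  by_cases hXx : ∃ k, X = x k
  · -- degenerate case : X is a node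
    obtain ⟨k, hk⟩ := hXx
    have hPX : P X = f X := by
      rw [hP]
      rw [Finset.sum_eq_single k]
      · rw [Finset.prod_congr rfl (fun j hj => ?_), Finset.prod_const_one, mul_one, hk]
        rw [hk, div_self (sub_ne_zero.mpr (fun h => (Finset.mem_erase.mp hj).1 (hx h).symm))]
      · intro i _ hik
        rw [Finset.prod_eq_zero (Finset.mem_erase.mpr ⟨fun h => hik h.symm, mem_univ k⟩)]
        · exact mul_zero _
        · rw [hk, sub_self, zero_div]
      · exact fun h => absurd (mem_univ k) h
    have hlX : ‖l X‖ = 0 := by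
      rw [hl, norm_eq_zero]
      exact Finset.prod_eq_zero (mem_univ k) (by rw [hk, sub_self])
    rw [hPX, sub_self, norm_zero, hlX, mul_zero, zero_mul]
  · push_neg at hXx
    simp only [hl]
    have h2pi := Real.two_pi_pos
    have hsphU : Metric.sphere c r ⊆ U := fun z hz => hUsub (Metric.sphere_subset_closedBall hz)
    have hfc : ContinuousOn f (Metric.sphere c r) := hf.continuousOn.mono hsphU
    have hne : ∀ z ∈ Metric.sphere c r, ∀ w ∈ Metric.ball c r, z ≠ w := by
      intro z hz w hw h
      rw [Metric.mem_sphere] at hz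
      rw [Metric.mem_ball, ← h, hz] at hw
      exact lt_irrefl r hw
    have hD : DiffContOnCl ℂ f (Metric.ball c r) :=
      ⟨hf.mono (fun z hz => hUsub (Metric.ball_subset_closedBall hz)),
        by rw [closure_ball c hr.ne']; exact hf.continuousOn.mono hUsub⟩
    have cauchy : ∀ w ∈ Metric.ball c r,
        (∮ z in C(c, r), (z - w)⁻¹ • f z) = (2 * Real.pi * Complex.I : ℂ) • f w :=
      fun w hw => hD.circleIntegral_sub_inv_smul hw
    set G : ℂ → ℂ :=
      fun z => f z * ((∏ i, (X - x i)) * ((∏ i, (z - x i)) * (z - X))⁻¹) with hG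
    have hci : ∀ w ∈ Metric.ball c r, CircleIntegrable (fun z => (z - w)⁻¹ • f z) c r := by
      intro w hw
      apply ContinuousOn.circleIntegrable hr.le
      exact ((continuousOn_id.sub continuousOn_const).inv₀
        (fun z hz => sub_ne_zero.mpr (hne z hz w hw))).smul hfc
    have hcisum : CircleIntegrable
        (fun z => ∑ i, (∏ j ∈ univ.erase i, (X - x j) / (x i - x j)) * ((z - x i)⁻¹ • f z)) c r := by
      apply ContinuousOn.circleIntegrable hr.le
      refine continuousOn_finset_sum _ fun i _ => continuousOn_const.mul ?_
      exact ((continuousOn_id.sub continuousOn_const).inv₀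
        (fun z hz => sub_ne_zero.mpr (hne z hz (x i) (hxball i)))).smul hfc
    have hsumint : (∮ z in C(c, r),
          ∑ i, (∏ j ∈ univ.erase i, (X - x j) / (x i - x j)) * ((z - x i)⁻¹ • f z))
        = ∑ i, (∏ j ∈ univ.erase i, (X - x j) / (x i - x j)) *
            (∮ z in C(c, r), (z - x i)⁻¹ • f z) := by
      have hci' : ∀ i : Fin (n+1), IntervalIntegrable (fun θ =>
          deriv (circleMap c r) θ • ((circleMap c r θ - x i)⁻¹ • f (circleMap c r θ)))
          MeasureTheory.volume 0 (2*Real.pi) := fun i => (hci (x i) (hxball i)).out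
      rw [circleIntegral]
      rw [intervalIntegral.integral_congr (g := fun θ =>
        ∑ i, (∏ j ∈ univ.erase i, (X - x j) / (x i - x j)) *
          (deriv (circleMap c r) θ • ((circleMap c r θ - x i)⁻¹ • f (circleMap c r θ))))
        (fun θ _ => by simp [smul_eq_mul, Finset.mul_sum, mul_left_comm])]
      calc (∫ θ in (0:ℝ)..(2*Real.pi), ∑ i, (∏ j ∈ univ.erase i, (X - x j) / (x i - x j)) *
              (deriv (circleMap c r) θ • ((circleMap c r θ - x i)⁻¹ • f (circleMap c r θ))))
          = ∑ i, ∫ θ in (0:ℝ)..(2*Real.pi), (∏ j ∈ univ.erase i, (X - x j) / (x i - x j)) *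
              (deriv (circleMap c r) θ • ((circleMap c r θ - x i)⁻¹ • f (circleMap c r θ))) :=
            intervalIntegral.integral_finset_sum (fun i _ => (hci' i).const_mul (∏ j ∈ univ.erase i, (X - x j) / (x i - x j)))
        _ = ∑ i, (∏ j ∈ univ.erase i, (X - x j) / (x i - x j)) *
              ∫ θ in (0:ℝ)..(2*Real.pi),
                deriv (circleMap c r) θ • ((circleMap c r θ - x i)⁻¹ • f (circleMap c r θ)) :=
            Finset.sum_congr rfl fun i _ => intervalIntegral.integral_const_mul _ _
        _ = _ := rfl
    have hmain : (∮ z in C(c, r), ((z - X)⁻¹ • f z -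
          ∑ i, (∏ j ∈ univ.erase i, (X - x j) / (x i - x j)) * ((z - x i)⁻¹ • f z)))
        = (2 * Real.pi * Complex.I : ℂ) * (f X - P X) := by
      rw [circleIntegral.integral_sub (hci X hX) hcisum, cauchy X hX, hsumint,
        Finset.sum_congr rfl fun i _ => by rw [cauchy (x i) (hxball i)]]
      rw [hP, smul_eq_mul, mul_sub, Finset.mul_sum]
      congr 1
      exact Finset.sum_congr rfl fun i _ => by rw [smul_eq_mul]; ring
    have hEq : Set.EqOn (fun z => (z - X)⁻¹ • f z -
          ∑ i, (∏ j ∈ univ.erase i, (X - x j) / (x i - x j)) * ((z - x i)⁻¹ • f z)) G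
        (Metric.sphere c r) := by
      intro z hz
      have hzx : ∀ i, z ≠ x i := fun i => hne z hz (x i) (hxball i)
      have hzX : z ≠ X := hne z hz X hX
      have hk := key_identity x hx X z hXx hzx hzX
      simp only [smul_eq_mul, hG]
      calc (z - X)⁻¹ * f z -
            ∑ i, (∏ j ∈ univ.erase i, (X - x j) / (x i - x j)) * ((z - x i)⁻¹ * f z)
          = ((z - X)⁻¹ -
            ∑ i, (∏ j ∈ univ.erase i, (X - x j) / (x i - x j)) * (z - x i)⁻¹) * f z := by
            rw [sub_mul, Finset.sum_mul]
            congr 1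
            exact Finset.sum_congr rfl fun i _ => by ring
        _ = _ := by rw [hk]; ring
    have hGint : (∮ z in C(c, r), G z) = (2 * Real.pi * Complex.I : ℂ) * (f X - P X) := by
      rw [← circleIntegral.integral_congr hr.le hEq]; exact hmain
    show ‖f X - P X‖ ≤ r / (2 * Real.pi) * (∫ θ in (0:ℝ)..(2*Real.pi), ‖f (circleMap c r θ)‖ / ‖circleMap c r θ - X‖) * ‖∏ i, (X - x i)‖ * (⨆ θ : Set.Icc (0:ℝ) (2 * Real.pi), 1 / ‖∏ i, (circleMap c r (θ:ℝ) - x i)‖)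
    have hfcm : Continuous fun θ : ℝ => f (circleMap c r θ) :=
      hfc.comp_continuous (continuous_circleMap c r) (fun θ => circleMap_mem_sphere c hr.le θ)
    have hprodc : Continuous fun θ : ℝ => (∏ i, (circleMap c r θ - x i)) :=
      continuous_finset_prod _ fun i _ => (continuous_circleMap c r).sub continuous_const
    have hAne : ∀ θ : ℝ, (∏ i, (circleMap c r θ - x i)) ≠ 0 := fun θ =>
      prod_ne_zero_iff.mpr fun i _ => sub_ne_zero.mpr
        (hne _ (circleMap_mem_sphere c hr.le θ) _ (hxball i))
    have hXne : ∀ θ : ℝ, (circleMap c r θ - X) ≠ 0 := fun θ =>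
      sub_ne_zero.mpr (hne _ (circleMap_mem_sphere c hr.le θ) _ hX)
    have hMbdd : BddAbove (Set.range fun θ : Set.Icc (0:ℝ) (2 * Real.pi) =>
        1 / ‖∏ i, (circleMap c r (θ:ℝ) - x i)‖) := by
      have hc2 : Continuous fun θ : Set.Icc (0:ℝ) (2 * Real.pi) =>
          1 / ‖∏ i, (circleMap c r (θ:ℝ) - x i)‖ := by
        simp only [one_div]
        refine Continuous.inv₀ ?_ fun θ => fun h => hAne (θ:ℝ) (norm_eq_zero.mp h)
        exact continuous_norm.comp (hprodc.comp continuous_subtype_val)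
      exact (isCompact_range hc2).bddAbove
    have hMle : ∀ θ ∈ Set.Icc (0:ℝ) (2 * Real.pi),
        (‖∏ i, (circleMap c r θ - x i)‖)⁻¹ ≤ (⨆ θ : Set.Icc (0:ℝ) (2 * Real.pi), 1 / ‖∏ i, (circleMap c r (θ:ℝ) - x i)‖) := by
      intro θ hθ
      have := le_ciSup hMbdd (⟨θ, hθ⟩ : Set.Icc (0:ℝ) (2 * Real.pi))
      simpa [one_div] using this
    have hGcont : Continuous fun θ : ℝ => deriv (circleMap c r) θ • G (circleMap c r θ) := by
      have h1 : Continuous fun θ : ℝ =>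
          ((∏ i, (circleMap c r θ - x i)) * (circleMap c r θ - X))⁻¹ := by
        refine Continuous.inv₀ (hprodc.mul ((continuous_circleMap c r).sub continuous_const))
          fun θ => mul_ne_zero (hAne θ) (hXne θ)
      simp only [deriv_circleMap, hG]
      exact ((continuous_circleMap 0 r).mul continuous_const).smul
        (hfcm.mul (continuous_const.mul h1))
    have hqcont : Continuous fun θ : ℝ =>
        ‖f (circleMap c r θ)‖ / ‖circleMap c r θ - X‖ := by
      refine Continuous.div (continuous_norm.comp hfcm)
        (continuous_norm.comp ((continuous_circleMap c r).sub continuous_const))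
        fun θ => fun h => hXne θ (norm_eq_zero.mp h)
    have habs : ∀ θ : ℝ, ‖deriv (circleMap c r) θ • G (circleMap c r θ)‖
        = r * (‖f (circleMap c r θ)‖ * (‖∏ i, (X - x i)‖ *
            (‖∏ i, (circleMap c r θ - x i)‖ * ‖circleMap c r θ - X‖)⁻¹)) := by
      intro θ
      simp only [hG, norm_smul, deriv_circleMap, norm_mul, norm_inv,
        norm_circleMap_zero, Complex.norm_I, _root_.abs_of_pos hr, mul_one]
    have hbound : ‖∮ z in C(c, r), G z‖ ≤ ∫ θ in (0:ℝ)..(2*Real.pi),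
        (r * (‖∏ i, (X - x i)‖ * (⨆ θ : Set.Icc (0:ℝ) (2 * Real.pi), 1 / ‖∏ i, (circleMap c r (θ:ℝ) - x i)‖))) *
          (‖f (circleMap c r θ)‖ / ‖circleMap c r θ - X‖) := by
      rw [circleIntegral]
      refine le_trans (intervalIntegral.norm_integral_le_integral_norm h2pi.le) ?_
      refine intervalIntegral.integral_mono_on h2pi.le
        (hGcont.norm.intervalIntegrable _ _)
        ((continuous_const.mul hqcont).intervalIntegrable _ _) ?_
      intro θ hθ
      rw [habs θ]
      have e1 : r * (‖f (circleMap c r θ)‖ * (‖∏ i, (X - x i)‖ *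
            (‖∏ i, (circleMap c r θ - x i)‖ * ‖circleMap c r θ - X‖)⁻¹))
          = (r * ‖∏ i, (X - x i)‖) *
            ((‖f (circleMap c r θ)‖ / ‖circleMap c r θ - X‖) *
              (‖∏ i, (circleMap c r θ - x i)‖)⁻¹) := by
        field_simp
      rw [e1]
      have e2 : (r * (‖∏ i, (X - x i)‖ * (⨆ θ : Set.Icc (0:ℝ) (2 * Real.pi), 1 / ‖∏ i, (circleMap c r (θ:ℝ) - x i)‖))) *
            (‖f (circleMap c r θ)‖ / ‖circleMap c r θ - X‖)
          = (r * ‖∏ i, (X - x i)‖) *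
            ((‖f (circleMap c r θ)‖ / ‖circleMap c r θ - X‖) * (⨆ θ : Set.Icc (0:ℝ) (2 * Real.pi), 1 / ‖∏ i, (circleMap c r (θ:ℝ) - x i)‖)) := by
        ring
      rw [e2]
      have hq0 : 0 ≤ ‖f (circleMap c r θ)‖ / ‖circleMap c r θ - X‖ :=
        div_nonneg (norm_nonneg _) (norm_nonneg _)
      refine mul_le_mul_of_nonneg_left ?_ (by positivity)
      exact mul_le_mul_of_nonneg_left (hMle θ hθ) hq0
    have hconst : (∫ θ in (0:ℝ)..(2*Real.pi), (r * (‖∏ i, (X - x i)‖ * (⨆ θ : Set.Icc (0:ℝ) (2 * Real.pi), 1 / ‖∏ i, (circleMap c r (θ:ℝ) - x i)‖))) *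
          (‖f (circleMap c r θ)‖ / ‖circleMap c r θ - X‖))
        = (r * (‖∏ i, (X - x i)‖ * (⨆ θ : Set.Icc (0:ℝ) (2 * Real.pi), 1 / ‖∏ i, (circleMap c r (θ:ℝ) - x i)‖))) * (∫ θ in (0:ℝ)..(2*Real.pi), ‖f (circleMap c r θ)‖ / ‖circleMap c r θ - X‖) :=
      intervalIntegral.integral_const_mul _ _
    have habs2 : 2 * Real.pi * ‖f X - P X‖ = ‖∮ z in C(c, r), G z‖ := by
      rw [hGint, norm_mul]
      have : ‖2 * (Real.pi : ℂ) * Complex.I‖ = 2 * Real.pi := by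
        simp [Complex.norm_real, _root_.abs_of_pos Real.pi_pos]
      rw [this]
    rw [show r / (2 * Real.pi) * (∫ θ in (0:ℝ)..(2*Real.pi), ‖f (circleMap c r θ)‖ / ‖circleMap c r θ - X‖) * ‖∏ i, (X - x i)‖ * (⨆ θ : Set.Icc (0:ℝ) (2 * Real.pi), 1 / ‖∏ i, (circleMap c r (θ:ℝ) - x i)‖)
        = ((r * (‖∏ i, (X - x i)‖ * (⨆ θ : Set.Icc (0:ℝ) (2 * Real.pi), 1 / ‖∏ i, (circleMap c r (θ:ℝ) - x i)‖))) * (∫ θ in (0:ℝ)..(2*Real.pi), ‖f (circleMap c r θ)‖ / ‖circleMap c r θ - X‖)) / (2 * Real.pi) from by ring]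
    rw [le_div_iff₀ h2pi]
    calc ‖f X - P X‖ * (2 * Real.pi) = ‖∮ z in C(c, r), G z‖ := by
          rw [← habs2]; ring
      _ ≤ _ := hbound
      _ = _ := hconst
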